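/- (Gaussian flux, two dimensions) Let x ∈ ℝ. For every t > 0, ∫₀ᵗ ∫_ℝ e^{−y²} · exp(−(x−y)²/(4s))/(2πs) dy ds = (e^{−x²}/√π) · ∫₀ᵗ (1/√(4s² + s)) · exp(4x²s/(4s + 1)) ds. This gives the surface temperature at boundary position x and time t produced by the time-independent Gaussian boundary flux q(s,y) = e^{−y²} on the half-plane. -/

import Mathlib

open Real MeasureTheory Set

lemma inner_gaussian (x s : ℝ) (hs : 0 < s) :
    (∫ y : ℝ, Real.exp (-y ^ 2) * Real.exp (-(x - y) ^ 2 / (4 * s)) / (2 * π * s))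
      = Real.exp (-x ^ 2) / Real.sqrt π
          * (1 / Real.sqrt (4 * s ^ 2 + s) * Real.exp (4 * x ^ 2 * s / (4 * s + 1))) := by
  have hs' : s ≠ 0 := hs.ne'
  have h4s : (0:ℝ) < 4 * s + 1 := by linarith
  have hπ : (0:ℝ) < π := pi_pos
  have h4s2 : (0:ℝ) < 4 * s ^ 2 + s := by nlinarith
  set a : ℝ := (4 * s + 1) / (4 * s) with ha
  have hapos : 0 < a := by rw [ha]; positivity
  set m : ℝ := x / (4 * s + 1) with hm
  set C : ℝ := Real.exp (-x ^ 2 / (4 * s + 1)) / (2 * π * s) with hC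
  have key : ∀ y : ℝ,
      Real.exp (-y ^ 2) * Real.exp (-(x - y) ^ 2 / (4 * s)) / (2 * π * s)
        = C * Real.exp (-a * (y - m) ^ 2) := by
    intro y
    rw [hC, ha, hm, ← Real.exp_add, div_mul_eq_mul_div, ← Real.exp_add]
    congr 2
    field_simp
    ring
  simp only [key]
  rw [MeasureTheory.integral_const_mul]
  rw [MeasureTheory.integral_sub_right_eq_self (fun y => Real.exp (-a * y ^ 2)) m]
  rw [integral_gaussian]
  have hsq : Real.sqrt (π / a) = 2 * π * s / (Real.sqrt π * Real.sqrt (4 * s ^ 2 + s)) := by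
    rw [eq_div_iff (by positivity)]
    rw [← Real.sqrt_mul hπ.le, ← Real.sqrt_mul (by positivity)]
    rw [show π / a * (π * (4 * s ^ 2 + s)) = (2 * π * s) ^ 2 by
      rw [ha]; field_simp; ring]
    exact Real.sqrt_sq (by positivity)
  rw [hC, hsq, show -x ^ 2 / (4 * s + 1) = -x ^ 2 + 4 * x ^ 2 * s / (4 * s + 1) by
    field_simp; ring, Real.exp_add]
  have h1 : Real.sqrt π ≠ 0 := by positivity
  have h2 : Real.sqrt (4 * s ^ 2 + s) ≠ 0 := by positivity
  field_simp

/-- (Gaussian flux, two dimensions) The surface temperature produced on the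
half-plane by the time-independent Gaussian boundary flux `q(s,y) = e^{−y²}`. -/
theorem gaussian_flux_two_dimensions (x : ℝ) :
    ∀ t : ℝ, 0 < t →
      (∫ s in Ioo (0:ℝ) t, ∫ y : ℝ,
          Real.exp (-y ^ 2) * Real.exp (-(x - y) ^ 2 / (4 * s)) / (2 * π * s))
        = Real.exp (-x ^ 2) / Real.sqrt π
            * ∫ s in Ioo (0:ℝ) t,
                1 / Real.sqrt (4 * s ^ 2 + s) * Real.exp (4 * x ^ 2 * s / (4 * s + 1)) := by
  intro t ht
  rw [← MeasureTheory.integral_const_mul]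
  apply MeasureTheory.setIntegral_congr_fun measurableSet_Ioo
  intro s hs
  exact inner_gaussian x s hs.1
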